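/- Let P be a real univariate polynomial of degree at most p that is nonnegative on [0, ∞). Then P can be written as a finite sum of polynomials of the form x ↦ ∑_{l=0}^{p} x^l · ∑_{i+j=2l, 0≤i,j≤p} y_i y_j: that is, there exist N ∈ ℕ and vectors y^{(1)}, …, y^{(N)} ∈ ℝ^{p+1} (indexed by 0,…,p) such that for all x ≥ 0, P(x) = ∑_{t=1}^{N} ∑_{l=0}^{p} x^l · ∑_{i+j=2l, 0≤i,j≤p} y^{(t)}_i y^{(t)}_j. -/

import Mathlib

open Polynomial

/-- Every real polynomial that is nonnegative on all of `ℝ` is a sum of two squares. -/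
lemma sos_of_nonneg : ∀ n : ℕ, ∀ Q : Polynomial ℝ, Q.natDegree ≤ n →
    (∀ t : ℝ, 0 ≤ Q.eval t) → ∃ A B : Polynomial ℝ, Q = A ^ 2 + B ^ 2 := by
  intro n
  induction n using Nat.strong_induction_on with
  | _ n IH =>
    intro Q hdeg hpos
    by_cases hQ0 : Q = 0
    · exact ⟨0, 0, by simp [hQ0]⟩
    by_cases hd0 : Q.natDegree = 0
    · obtain ⟨c, rfl⟩ := natDegree_eq_zero.mp hd0
      have hc : 0 ≤ c := by simpa using hpos 0
      refine ⟨C (Real.sqrt c), 0, ?_⟩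
      rw [← map_pow, Real.sq_sqrt hc]
      simp
    -- find a complex root
    have hd1 : 0 < Q.natDegree := Nat.pos_of_ne_zero hd0
    obtain ⟨z, hz⟩ : ∃ z : ℂ, aeval z Q = 0 := by
      apply Complex.isAlgClosed.exists_aeval_eq_zero
      exact_mod_cast (natDegree_pos_iff_degree_pos.mp hd1).ne'
    set a := z.re with ha
    set b := z.im with hb
    set q : Polynomial ℝ := (X - C a) ^ 2 + C (b ^ 2) with hq
    have key : q ∣ Q := by
      by_cases hb0 : b = 0
      · -- real root; it is a double root since Q is nonnegative
        have hzre : z = (a : ℂ) := Complex.ext (by simp [ha]) (by simp [← hb, hb0])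
        have haroot : Q.eval a = 0 := by
          have := hz
          rw [hzre] at this
          erw [Polynomial.aeval_ofReal, RCLike.ofReal_eq_zero] at this
          exact this
        obtain ⟨R, hR⟩ := (dvd_iff_isRoot.mpr haroot)
        have hmin : IsLocalMin (fun t => Q.eval t) a :=
          Filter.Eventually.of_forall fun x => by simpa [haroot] using hpos x
        have hderiv : Q.derivative.eval a = 0 := by
          have := hmin.deriv_eq_zero
          rwa [Polynomial.deriv] at this
        have hRroot : R.eval a = 0 := by
          have hd : Q.derivative = R + (X - C a) * R.derivative := by
            rw [hR, derivative_mul, derivative_X_sub_C]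
            ring
          have := hderiv
          rw [hd] at this
          simpa using this
        obtain ⟨S, hS⟩ := (dvd_iff_isRoot.mpr hRroot)
        refine ⟨S, ?_⟩
        rw [hq, hb0]
        simp only [ne_eq, OfNat.ofNat_ne_zero, not_false_eq_true, zero_pow, map_zero, add_zero]
        rw [hR, hS]
        ring
      · -- non-real root : quadratic factor
        have hdvd := Q.quadratic_dvd_of_aeval_eq_zero_im_ne_zero hz hb0
        have hqeq : q = X ^ 2 - C (2 * z.re) * X + C (‖z‖ ^ 2) := by
          have hnorm : ‖z‖ ^ 2 = a ^ 2 + b ^ 2 := by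
            rw [← Complex.normSq_eq_norm_sq, Complex.normSq_apply]
            ring
          rw [hq, hnorm]
          simp only [map_add, map_mul, map_pow, map_ofNat]
          ring
        rwa [hqeq]
    obtain ⟨S, hQS⟩ := key
    have hqpos : ∀ t : ℝ, 0 ≤ q.eval t := by
      intro t
      simp only [hq, eval_add, eval_pow, eval_sub, eval_X, eval_C]
      positivity
    have hq0 : q ≠ 0 := by
      intro h
      have : q.eval (a + 1) = 0 := by rw [h]; simp
      simp only [hq, eval_add, eval_pow, eval_sub, eval_X, eval_C] at this
      nlinarith [sq_nonneg b]
    have hS0 : S ≠ 0 := by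
      intro h
      exact hQ0 (by rw [hQS, h, mul_zero])
    have hqdeg : q.natDegree = 2 := by
      rw [hq]
      compute_degree!
    have hSlt : S.natDegree < n := by
      have h1 : Q.natDegree = q.natDegree + S.natDegree := by
        rw [hQS, natDegree_mul hq0 hS0]
      omega
    have hSpos : ∀ t : ℝ, 0 ≤ S.eval t := by
      have hsub : {t : ℝ | q.eval t ≠ 0} ⊆ {t : ℝ | 0 ≤ S.eval t} := by
        intro t ht
        have h1 : 0 < q.eval t := (hqpos t).lt_of_ne (Ne.symm ht)
        have h2 := hpos t
        rw [hQS, eval_mul] at h2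
        exact nonneg_of_mul_nonneg_right h2 h1
      have hdense : Dense {t : ℝ | q.eval t ≠ 0} := by
        have hfin : {t : ℝ | q.IsRoot t}.Finite := finite_setOf_isRoot hq0
        have := hfin.countable.dense_compl ℝ
        convert this using 1
        exact Set.ext fun t => Iff.rfl
      have hclosed : IsClosed {t : ℝ | 0 ≤ S.eval t} :=
        isClosed_le continuous_const (Polynomial.continuous S)
      intro t
      have ht : t ∈ closure {t : ℝ | q.eval t ≠ 0} := by
        rw [hdense.closure_eq]; trivial
      exact closure_minimal hsub hclosed ht
    obtain ⟨A, B, hAB⟩ := IH S.natDegree hSlt S le_rfl hSpos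
    refine ⟨(X - C a) * A - C b * B, (X - C a) * B + C b * A, ?_⟩
    have hCb : C (b ^ 2) = (C b) ^ 2 := by rw [map_pow]
    rw [hQS, hAB, hq, hCb]
    ring

lemma sq_natDegree_le_aux (A B : Polynomial ℝ) (h : (A ^ 2).natDegree ≤ (B ^ 2).natDegree)
    (hB : B ≠ 0) : (B ^ 2).natDegree ≤ (A ^ 2 + B ^ 2).natDegree := by
  apply le_natDegree_of_ne_zero
  rw [coeff_add]
  have h1 : 0 < (B ^ 2).coeff (B ^ 2).natDegree := by
    rw [coeff_natDegree, leadingCoeff_pow]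
    have := leadingCoeff_ne_zero.mpr hB
    positivity
  have h2 : 0 ≤ (A ^ 2).coeff (B ^ 2).natDegree := by
    rcases lt_or_eq_of_le h with hlt | heq
    · rw [coeff_eq_zero_of_natDegree_lt hlt]
    · rw [← heq, coeff_natDegree, leadingCoeff_pow]
      exact sq_nonneg _
  linarith

lemma sq_natDegree_le (A B : Polynomial ℝ) : (A ^ 2).natDegree ≤ (A ^ 2 + B ^ 2).natDegree := by
  by_cases hA : A = 0
  · simp [hA]
  by_cases hB : B = 0
  · simp [hB]
  rcases le_total ((A ^ 2).natDegree) ((B ^ 2).natDegree) with h | h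
  · exact le_trans h (sq_natDegree_le_aux A B h hB)
  · have := sq_natDegree_le_aux B A h hA
    rwa [add_comm] at this

/-- key coefficient identity -/
lemma coeff_sq_eq_double_sum (p l : ℕ) (A : Polynomial ℝ) (hA : A.natDegree ≤ p) :
    (∑ i : Fin (p + 1), ∑ j : Fin (p + 1),
      if i.val + j.val = 2 * l then A.coeff i * A.coeff j else 0) = (A ^ 2).coeff (2 * l) := by
  rw [sq, coeff_mul]
  have h1 : (∑ i : Fin (p + 1), ∑ j : Fin (p + 1),
      if i.val + j.val = 2 * l then A.coeff i * A.coeff j else 0)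
      = ∑ i ∈ Finset.range (p + 1), ∑ j ∈ Finset.range (p + 1),
          if i + j = 2 * l then A.coeff i * A.coeff j else 0 := by
    rw [Fin.sum_univ_eq_sum_range (fun i => ∑ j : Fin (p + 1),
      if i + j.val = 2 * l then A.coeff i * A.coeff j.val else 0)]
    exact Finset.sum_congr rfl fun i _ => Fin.sum_univ_eq_sum_range
      (fun j => if i + j = 2 * l then A.coeff i * A.coeff j else 0) (p + 1)
  rw [h1, ← Finset.sum_product', ← Finset.sum_filter]
  apply Finset.sum_subset
  · intro x hx
    rw [Finset.mem_filter] at hx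
    exact Finset.HasAntidiagonal.mem_antidiagonal.mpr hx.2
  · intro x hx hxn
    rw [Finset.HasAntidiagonal.mem_antidiagonal] at hx
    rw [Finset.mem_filter, Finset.mem_product, Finset.mem_range, Finset.mem_range] at hxn
    have : p < x.1 ∨ p < x.2 := by
      by_contra h
      push_neg at h
      exact hxn ⟨⟨by omega, by omega⟩, hx⟩
    rcases this with h | h
    · rw [coeff_eq_zero_of_natDegree_lt (lt_of_le_of_lt hA h), zero_mul]
    · rw [coeff_eq_zero_of_natDegree_lt (lt_of_le_of_lt hA h), mul_zero]



/-- a real univariate polynomial of degree at most `p` that is nonnegative on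
`[0, ∞)` is a finite sum of polynomials of the form
`x ↦ ∑_{l=0}^{p} x^l ∑_{i+j=2l, 0≤i,j≤p} y_i y_j`. -/
theorem nonneg_poly_on_halfline_decomposition (p : ℕ) (P : Polynomial ℝ)
    (hdeg : P.natDegree ≤ p) (hpos : ∀ x : ℝ, 0 ≤ x → 0 ≤ P.eval x) :
    ∃ (N : ℕ) (y : Fin N → Fin (p + 1) → ℝ),
      ∀ x : ℝ, 0 ≤ x →
        P.eval x = ∑ t : Fin N, ∑ l ∈ Finset.range (p + 1), x ^ l *
          ∑ i : Fin (p + 1), ∑ j : Fin (p + 1),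
            if i.val + j.val = 2 * l then y t i * y t j else 0 := by
  classical
  set Q : Polynomial ℝ := ∑ k ∈ Finset.range (p + 1), C (P.coeff k) * X ^ (2 * k) with hQ
  have hQeval : ∀ t : ℝ, Q.eval t = P.eval (t ^ 2) := by
    intro t
    rw [hQ, eval_finset_sum, eval_eq_sum_range' (Nat.lt_succ_of_le hdeg) (t ^ 2)]
    refine Finset.sum_congr rfl fun k hk => ?_
    rw [eval_mul, eval_C, eval_pow, eval_X, ← pow_mul, mul_comm 2 k]
  have hQdeg : Q.natDegree ≤ 2 * p := by
    apply natDegree_sum_le_of_forall_le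
    intro k hk
    apply le_trans (natDegree_C_mul_le _ _)
    rw [natDegree_X_pow]
    have := Finset.mem_range.mp hk; omega
  have hQpos : ∀ t : ℝ, 0 ≤ Q.eval t := fun t => by rw [hQeval]; exact hpos _ (sq_nonneg t)
  obtain ⟨A, B, hAB⟩ := sos_of_nonneg (2 * p) Q hQdeg hQpos
  have hAdeg : A.natDegree ≤ p := by
    by_cases hA : A = 0
    · simp [hA]
    have h1 : (A ^ 2).natDegree ≤ 2 * p := by
      refine le_trans ?_ hQdeg
      rw [hAB]
      exact sq_natDegree_le A B
    rw [natDegree_pow] at h1; omega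
  have hBdeg : B.natDegree ≤ p := by
    by_cases hB : B = 0
    · simp [hB]
    have h2 : (B ^ 2).natDegree ≤ 2 * p := by
      refine le_trans ?_ hQdeg
      rw [hAB, add_comm]
      exact sq_natDegree_le B A
    rw [natDegree_pow] at h2; omega
  have hQcoeff : ∀ l, l ≤ p → Q.coeff (2 * l) = P.coeff l := by
    intro l hl
    rw [hQ, finset_sum_coeff]
    simp only [coeff_C_mul, coeff_X_pow, mul_ite, mul_one, mul_zero]
    have hcong : ∀ k ∈ Finset.range (p + 1),
        (if 2 * l = 2 * k then P.coeff k else 0) = if k = l then P.coeff k else 0 := by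
      intro k hk
      refine if_congr ?_ rfl rfl
      omega
    rw [Finset.sum_congr rfl hcong, Finset.sum_ite_eq' (Finset.range (p + 1)) l]
    simp [Nat.lt_succ_of_le hl]
  refine ⟨2, ![fun i => A.coeff i, fun i => B.coeff i], ?_⟩
  intro x hx
  rw [Fin.sum_univ_two]
  simp only [Matrix.cons_val_zero, Matrix.cons_val_one, Matrix.head_cons]
  rw [eval_eq_sum_range' (Nat.lt_succ_of_le hdeg) x, ← Finset.sum_add_distrib]
  apply Finset.sum_congr rfl
  intro l hl
  rw [coeff_sq_eq_double_sum p l A hAdeg, coeff_sq_eq_double_sum p l B hBdeg,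
    ← mul_add, ← coeff_add, ← hAB, hQcoeff l (Nat.lt_succ_iff.mp (Finset.mem_range.mp hl))]
  ring
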